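/- On ℝ^7 with coordinates (t, x, y, x_1, y_1, x_2, y_2), consider the vector fields Z'_1 = x_2(∂_t + x_1∂_x + y_1∂_y) + ∂_{x_1} + y_2∂_{y_1}, Z'_2 = ∂_{x_2}, Z'_3 = ∂_{y_2}. At every point p ∈ ℝ^7: (a) the span of Z'_1(p), Z'_2(p), Z'_3(p) has dimension 3; (b) the span of these three vectors together with the values at p of the pairwise Lie brackets [Z'_i, Z'_j] (1 ≤ i < j ≤ 3) has dimension 5; (c) the span of the six vector fields in (b) together with the values at p of all pairwise Lie brackets among those six vector fields equals all of ℝ^7. -/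

import Mathlib

open ContinuousLinearMap


/-- The Lie bracket of vector fields on `ℝ^N`:
`[v, w](p) = Dw(p)·v(p) − Dv(p)·w(p)`. -/
noncomputable def lieBracket {N : ℕ} (v w : (Fin N → ℝ) → Fin N → ℝ) :
    (Fin N → ℝ) → Fin N → ℝ :=
  fun p => fderiv ℝ w p (v p) - fderiv ℝ v p (w p)

/-- Coordinates on `ℝ^7`: `(t, x, y, x₁, y₁, x₂, y₂)` = indices `0, …, 6`.
`Z₁' = x₂(∂_t + x₁∂_x + y₁∂_y) + ∂_{x₁} + y₂∂_{y₁}`. -/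
def Z1' : (Fin 7 → ℝ) → Fin 7 → ℝ := fun p =>
  p 5 • (Pi.single 0 (1 : ℝ) + p 3 • (Pi.single 1 (1 : ℝ) : Fin 7 → ℝ)
      + p 4 • (Pi.single 2 (1 : ℝ) : Fin 7 → ℝ))
    + Pi.single 3 1
    + p 6 • (Pi.single 4 (1 : ℝ) : Fin 7 → ℝ)

/-- `Z₂' = ∂_{x₂}`. -/
def Z2' : (Fin 7 → ℝ) → Fin 7 → ℝ := fun _ => Pi.single 5 1

/-- `Z₃' = ∂_{y₂}`. -/
def Z3' : (Fin 7 → ℝ) → Fin 7 → ℝ := fun _ => Pi.single 6 1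

noncomputable abbrev pr (i : Fin 7) : (Fin 7 → ℝ) →L[ℝ] ℝ := proj i

noncomputable def L1 (p : Fin 7 → ℝ) : (Fin 7 → ℝ) →L[ℝ] (Fin 7 → ℝ) :=
  (pr 5).smulRight (Pi.single 0 (1:ℝ))
  + (p 5 • pr 3 + p 3 • pr 5).smulRight (Pi.single 1 (1:ℝ))
  + (p 5 • pr 4 + p 4 • pr 5).smulRight (Pi.single 2 (1:ℝ))
  + (pr 6).smulRight (Pi.single 4 (1:ℝ))

lemma Z1'_eq : Z1' = fun p =>
    (p 5) • (Pi.single 0 (1:ℝ) : Fin 7 → ℝ) + (p 5 * p 3) • (Pi.single 1 (1:ℝ) : Fin 7 → ℝ)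
    + (p 5 * p 4) • (Pi.single 2 (1:ℝ) : Fin 7 → ℝ) + ((Pi.single 3 (1:ℝ) : Fin 7 → ℝ)
    + (p 6) • (Pi.single 4 (1:ℝ) : Fin 7 → ℝ)) := by
  funext p
  simp only [Z1', smul_add, smul_smul]
  module

lemma hasFDerivZ1 (p : Fin 7 → ℝ) : HasFDerivAt Z1' (L1 p) p := by
  rw [Z1'_eq]
  have h5 : HasFDerivAt (fun q : Fin 7 → ℝ => q 5) (pr 5) p := (pr 5).hasFDerivAt
  have h3 : HasFDerivAt (fun q : Fin 7 → ℝ => q 3) (pr 3) p := (pr 3).hasFDerivAt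
  have h4 : HasFDerivAt (fun q : Fin 7 → ℝ => q 4) (pr 4) p := (pr 4).hasFDerivAt
  have h6 : HasFDerivAt (fun q : Fin 7 → ℝ => q 6) (pr 6) p := (pr 6).hasFDerivAt
  have := ((h5.smul_const (Pi.single 0 (1:ℝ) : Fin 7 → ℝ)).add
      ((h5.mul h3).smul_const (Pi.single 1 (1:ℝ) : Fin 7 → ℝ))).add
      (((h5.mul h4).smul_const (Pi.single 2 (1:ℝ) : Fin 7 → ℝ)).add
      ((hasFDerivAt_const (Pi.single 3 (1:ℝ) : Fin 7 → ℝ) p).add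
        (h6.smul_const (Pi.single 4 (1:ℝ) : Fin 7 → ℝ))))
  refine (this.congr_of_eventuallyEq (Filter.Eventually.of_forall fun q => ?_)).congr_fderiv ?_
  · simp only [Pi.add_apply, Pi.mul_apply]; module
  · unfold L1
    ext v i <;> (simp [smul_smul]; try ring)

lemma fderiv_Z1' (p : Fin 7 → ℝ) : fderiv ℝ Z1' p = L1 p := (hasFDerivZ1 p).fderiv

lemma L1_apply (p v : Fin 7 → ℝ) : L1 p v =
    v 5 • (Pi.single 0 (1:ℝ) : Fin 7 → ℝ)
    + (p 5 * v 3 + p 3 * v 5) • (Pi.single 1 (1:ℝ) : Fin 7 → ℝ)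
    + (p 5 * v 4 + p 4 * v 5) • (Pi.single 2 (1:ℝ) : Fin 7 → ℝ)
    + v 6 • (Pi.single 4 (1:ℝ) : Fin 7 → ℝ) := by
  simp [L1, smul_smul]
  try module

lemma lie12_eq : lieBracket Z1' Z2' = fun p =>
    -((Pi.single 0 (1:ℝ) : Fin 7 → ℝ) + p 3 • (Pi.single 1 (1:ℝ) : Fin 7 → ℝ)
      + p 4 • (Pi.single 2 (1:ℝ) : Fin 7 → ℝ)) := by
  funext p
  have hZ2 : Z2' = fun _ => (Pi.single 5 1 : Fin 7 → ℝ) := rfl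
  simp only [lieBracket, hZ2, fderiv_const, Pi.zero_apply, zero_apply, fderiv_Z1', L1_apply]
  funext i
  simp [Pi.single_apply]

lemma lie13_eq : lieBracket Z1' Z3' = fun _ => -(Pi.single 4 (1:ℝ) : Fin 7 → ℝ) := by
  funext p
  have hZ3 : Z3' = fun _ => (Pi.single 6 1 : Fin 7 → ℝ) := rfl
  simp only [lieBracket, hZ3, fderiv_const, Pi.zero_apply, zero_apply, fderiv_Z1', L1_apply]
  funext i
  simp [Pi.single_apply]

lemma lie23_eq : lieBracket Z2' Z3' = fun _ => (0 : Fin 7 → ℝ) := by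
  funext p
  have hZ2 : Z2' = fun _ => (Pi.single 5 1 : Fin 7 → ℝ) := rfl
  have hZ3 : Z3' = fun _ => (Pi.single 6 1 : Fin 7 → ℝ) := rfl
  simp [lieBracket, hZ2, hZ3, fderiv_const]

noncomputable def L4 : (Fin 7 → ℝ) →L[ℝ] (Fin 7 → ℝ) :=
  -((pr 3).smulRight (Pi.single 1 (1:ℝ)) + (pr 4).smulRight (Pi.single 2 (1:ℝ)))

lemma hasFDerivW4 (p : Fin 7 → ℝ) : HasFDerivAt (lieBracket Z1' Z2') L4 p := by
  rw [lie12_eq]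
  have h3 : HasFDerivAt (fun q : Fin 7 → ℝ => q 3) (pr 3) p := (pr 3).hasFDerivAt
  have h4 : HasFDerivAt (fun q : Fin 7 → ℝ => q 4) (pr 4) p := (pr 4).hasFDerivAt
  have := (((hasFDerivAt_const (Pi.single 0 (1:ℝ) : Fin 7 → ℝ) p).add
      (h3.smul_const (Pi.single 1 (1:ℝ) : Fin 7 → ℝ))).add
      (h4.smul_const (Pi.single 2 (1:ℝ) : Fin 7 → ℝ))).neg
  refine this.congr_fderiv ?_
  unfold L4
  ext v i <;> simp

lemma L4_apply (v : Fin 7 → ℝ) : L4 v =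
    -(v 3 • (Pi.single 1 (1:ℝ) : Fin 7 → ℝ) + v 4 • (Pi.single 2 (1:ℝ) : Fin 7 → ℝ)) := by
  simp [L4]

lemma Z1'_apply (p : Fin 7 → ℝ) : Z1' p 3 = 1 ∧ Z1' p 4 = p 6 ∧ Z1' p 5 = 0 ∧ Z1' p 6 = 0
    ∧ Z1' p 0 = p 5 := by
  refine ⟨?_, ?_, ?_, ?_, ?_⟩ <;> simp [Z1', Pi.single_apply]

lemma lie03_eq (p : Fin 7 → ℝ) : lieBracket Z1' (lieBracket Z1' Z2') p =
    -((Pi.single 1 (1:ℝ) : Fin 7 → ℝ) + p 6 • (Pi.single 2 (1:ℝ) : Fin 7 → ℝ)) := by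
  rw [show lieBracket Z1' (lieBracket Z1' Z2') p
      = fderiv ℝ (lieBracket Z1' Z2') p (Z1' p) - fderiv ℝ Z1' p (lieBracket Z1' Z2' p) from rfl,
    (hasFDerivW4 p).fderiv, fderiv_Z1', L4_apply, L1_apply, lie12_eq]
  funext i
  simp [Z1', Pi.single_apply]
  try ring

lemma lie34_eq (p : Fin 7 → ℝ) :
    lieBracket (lieBracket Z1' Z2') (lieBracket Z1' Z3') p =
      -(Pi.single 2 (1:ℝ) : Fin 7 → ℝ) := by
  have h5 : fderiv ℝ (lieBracket Z1' Z3') p = 0 := by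
    rw [lie13_eq]; exact fderiv_const_apply _
  rw [show lieBracket (lieBracket Z1' Z2') (lieBracket Z1' Z3') p
      = fderiv ℝ (lieBracket Z1' Z3') p (lieBracket Z1' Z2' p)
        - fderiv ℝ (lieBracket Z1' Z2') p (lieBracket Z1' Z3' p) from rfl,
    (hasFDerivW4 p).fderiv, h5, L4_apply, lie13_eq]
  funext i
  simp [Pi.single_apply]

/-- The six vector fields `Z₁', Z₂', Z₃', [Z₁',Z₂'], [Z₁',Z₃'], [Z₂',Z₃']`. -/
noncomputable def sixFields' : Fin 6 → (Fin 7 → ℝ) → Fin 7 → ℝ :=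
  ![Z1', Z2', Z3', lieBracket Z1' Z2', lieBracket Z1' Z3', lieBracket Z2' Z3']

lemma lin3 (p : Fin 7 → ℝ) : LinearIndependent ℝ ![Z1' p, Z2' p, Z3' p] := by
  rw [Fintype.linearIndependent_iff]
  intro g hg
  have h3 := congr_fun hg 3
  have h5 := congr_fun hg 5
  have h6 := congr_fun hg 6
  simp [Fin.sum_univ_three, Z1', Z2', Z3', Pi.single_apply, Matrix.vecHead, Matrix.vecTail] at h3 h5 h6
  intro i
  fin_cases i <;> simp_all

lemma lin5 (p : Fin 7 → ℝ) : LinearIndependent ℝ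
    ![Z1' p, Z2' p, Z3' p, lieBracket Z1' Z2' p, lieBracket Z1' Z3' p] := by
  rw [Fintype.linearIndependent_iff]
  intro g hg
  rw [lie12_eq, lie13_eq] at hg
  have h3 := congr_fun hg 3
  have h5 := congr_fun hg 5
  have h6 := congr_fun hg 6
  have h0 := congr_fun hg 0
  have h4 := congr_fun hg 4
  simp [Fin.sum_univ_five, Z1', Z2', Z3', Pi.single_apply, Matrix.vecHead, Matrix.vecTail] at h3 h5 h6 h0 h4
  intro i
  fin_cases i <;> simp_all

/-- The tower of Lie squares of `(Z₁', Z₂', Z₃')` has ranks `3, 5, 7` at every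
point of `ℝ^7`. -/
theorem singular_model_flag_ranks (p : Fin 7 → ℝ) :
    Module.finrank ℝ (Submodule.span ℝ {Z1' p, Z2' p, Z3' p}) = 3 ∧
    Module.finrank ℝ (Submodule.span ℝ
      ({Z1' p, Z2' p, Z3' p} ∪
        {lieBracket Z1' Z2' p, lieBracket Z1' Z3' p, lieBracket Z2' Z3' p})) = 5 ∧
    Submodule.span ℝ
      ((Set.range fun i : Fin 6 => sixFields' i p) ∪
        {x : Fin 7 → ℝ | ∃ i j : Fin 6, i < j ∧
          x = lieBracket (sixFields' i) (sixFields' j) p}) = ⊤ := by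
  refine ⟨?_, ?_, ?_⟩
  · have hset : ({Z1' p, Z2' p, Z3' p} : Set (Fin 7 → ℝ))
        = Set.range ![Z1' p, Z2' p, Z3' p] := by
      ext x; simp; tauto
    rw [hset, finrank_span_eq_card (lin3 p)]
    simp
  · have h23 : lieBracket Z2' Z3' p = 0 := by rw [lie23_eq]
    have hset : (({Z1' p, Z2' p, Z3' p} ∪
          {lieBracket Z1' Z2' p, lieBracket Z1' Z3' p, lieBracket Z2' Z3' p}) : Set (Fin 7 → ℝ))
        = insert 0 (Set.range ![Z1' p, Z2' p, Z3' p, lieBracket Z1' Z2' p, lieBracket Z1' Z3' p]) := by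
      rw [h23]; ext x; simp [Fin.exists_fin_succ]; tauto
    rw [hset, Submodule.span_insert_zero, finrank_span_eq_card (lin5 p)]
    simp
  · set S := ((Set.range fun i : Fin 6 => sixFields' i p) ∪
          {x : Fin 7 → ℝ | ∃ i j : Fin 6, i < j ∧
            x = lieBracket (sixFields' i) (sixFields' j) p}) with hS
    set M := Submodule.span ℝ S with hM
    have hmem : ∀ i : Fin 6, sixFields' i p ∈ M :=
      fun i => Submodule.subset_span (Set.mem_union_left _ ⟨i, rfl⟩)
    have hbr : ∀ i j : Fin 6, i < j → lieBracket (sixFields' i) (sixFields' j) p ∈ M :=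
      fun i j h => Submodule.subset_span (Set.mem_union_right _ ⟨i, j, h, rfl⟩)
    have s0 : sixFields' 0 = Z1' := rfl
    have s1 : sixFields' 1 = Z2' := rfl
    have s2 : sixFields' 2 = Z3' := rfl
    have s3 : sixFields' 3 = lieBracket Z1' Z2' := rfl
    have s4 : sixFields' 4 = lieBracket Z1' Z3' := rfl
    have hZ1 : Z1' p ∈ M := by have := hmem 0; rwa [s0] at this
    have he5 : (Pi.single 5 1 : Fin 7 → ℝ) ∈ M := by have := hmem 1; rwa [s1] at this
    have he6 : (Pi.single 6 1 : Fin 7 → ℝ) ∈ M := by have := hmem 2; rwa [s2] at this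
    have h12 : lieBracket Z1' Z2' p ∈ M := by have := hmem 3; rwa [s3] at this
    have h13 : lieBracket Z1' Z3' p ∈ M := by have := hmem 4; rwa [s4] at this
    have h03 : lieBracket Z1' (lieBracket Z1' Z2') p ∈ M := by
      have := hbr 0 3 (by decide); rwa [s0, s3] at this
    have h34 : lieBracket (lieBracket Z1' Z2') (lieBracket Z1' Z3') p ∈ M := by
      have := hbr 3 4 (by decide); rwa [s3, s4] at this
    have he4 : (Pi.single 4 1 : Fin 7 → ℝ) ∈ M := by
      have := M.neg_mem h13
      rwa [lie13_eq, neg_neg] at this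
    have he2 : (Pi.single 2 1 : Fin 7 → ℝ) ∈ M := by
      have := M.neg_mem h34
      rwa [lie34_eq, neg_neg] at this
    have he1 : (Pi.single 1 1 : Fin 7 → ℝ) ∈ M := by
      have := M.sub_mem (M.neg_mem h03) (M.smul_mem (p 6) he2)
      rw [lie03_eq, neg_neg] at this
      have heq : (Pi.single 1 1 : Fin 7 → ℝ)
          = ((Pi.single 1 1 : Fin 7 → ℝ) + p 6 • (Pi.single 2 1 : Fin 7 → ℝ))
            - p 6 • (Pi.single 2 1 : Fin 7 → ℝ) := by module
      rwa [← heq] at this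
    have he0 : (Pi.single 0 1 : Fin 7 → ℝ) ∈ M := by
      have := M.sub_mem (M.sub_mem (M.neg_mem h12) (M.smul_mem (p 3) he1)) (M.smul_mem (p 4) he2)
      rw [lie12_eq, neg_neg] at this
      have heq : (Pi.single 0 1 : Fin 7 → ℝ)
          = ((Pi.single 0 1 : Fin 7 → ℝ) + p 3 • (Pi.single 1 1 : Fin 7 → ℝ)
              + p 4 • (Pi.single 2 1 : Fin 7 → ℝ))
            - p 3 • (Pi.single 1 1 : Fin 7 → ℝ) - p 4 • (Pi.single 2 1 : Fin 7 → ℝ) := by module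
      rwa [← heq] at this
    have he3 : (Pi.single 3 1 : Fin 7 → ℝ) ∈ M := by
      have := M.sub_mem (M.sub_mem (M.sub_mem (M.sub_mem hZ1 (M.smul_mem (p 5) he0))
        (M.smul_mem (p 5 * p 3) he1)) (M.smul_mem (p 5 * p 4) he2)) (M.smul_mem (p 6) he4)
      have heq : Z1' p - p 5 • (Pi.single 0 1 : Fin 7 → ℝ)
          - (p 5 * p 3) • (Pi.single 1 1 : Fin 7 → ℝ)
          - (p 5 * p 4) • (Pi.single 2 1 : Fin 7 → ℝ)
          - p 6 • (Pi.single 4 1 : Fin 7 → ℝ) = (Pi.single 3 1 : Fin 7 → ℝ) := by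
        simp only [Z1', smul_add, smul_smul]; module
      rwa [heq] at this
    rw [eq_top_iff, ← (Pi.basisFun ℝ (Fin 7)).span_eq]
    apply Submodule.span_le.2
    rintro x ⟨i, rfl⟩
    rw [Pi.basisFun_apply]
    fin_cases i
    · exact he0
    · exact he1
    · exact he2
    · exact he3
    · exact he4
    · exact he5
    · exact he6
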